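/- The moments accountant is a special case of the Bayesian accountant: let σ > 0, q ∈ [0, 1], n ∈ ℕ, and define φ(d) = Σ_{k=0}^{n} C(n, k) · q^k · (1 − q)^{n−k} · exp((k² − k)·d² / (2σ²)) for d ≥ 0. Then φ is nondecreasing on [0, ∞), and consequently, for any probability measure μ on a measurable space X and any measurable function d : X → ℝ with |d(x')| ≤ C for μ-almost every x', one has log ∫_X φ(|d(x')|) dμ(x') ≤ log φ(C); i.e. the Bayesian privacy cost of the subsampled Gaussian mechanism, computed with the data-dependent gradient-difference norms |d(x')|, never exceeds the moments-accountant bound computed with the worst-case sensitivity C. -/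
import Mathlib

set_option autoImplicit false

open MeasureTheory ProbabilityTheory ENNReal

noncomputable def phi (σ q : ℝ) (n : ℕ) (d : ℝ) : ℝ :=
  ∑ k ∈ Finset.range (n + 1),
    (n.choose k : ℝ) * q ^ k * (1 - q) ^ (n - k) *
      Real.exp (((k : ℝ) ^ 2 - (k : ℝ)) * d ^ 2 / (2 * σ ^ 2))

lemma k_sq_aux (k : ℕ) : (0:ℝ) ≤ (k : ℝ) ^ 2 - (k : ℝ) := by
  rcases Nat.eq_zero_or_pos k with h | h
  · simp [h]
  · have : (1 : ℝ) ≤ (k : ℝ) := by exact_mod_cast h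
    nlinarith

lemma one_le_phi (σ : ℝ) (q : ℝ) (hq0 : 0 ≤ q) (hq1 : q ≤ 1) (n : ℕ) (d : ℝ) :
    1 ≤ phi σ q n d := by
  have h1 : (1 : ℝ) = ∑ k ∈ Finset.range (n + 1),
      q ^ k * (1 - q) ^ (n - k) * (n.choose k : ℝ) := by
    rw [← add_pow]; norm_num
  rw [h1, phi]
  apply Finset.sum_le_sum
  intro k hk
  have hq' : (0:ℝ) ≤ 1 - q := by linarith
  have hc : 0 ≤ (n.choose k : ℝ) * q ^ k * (1 - q) ^ (n - k) := by positivity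
  have he : 1 ≤ Real.exp (((k : ℝ) ^ 2 - (k : ℝ)) * d ^ 2 / (2 * σ ^ 2)) := by
    rw [Real.one_le_exp_iff]
    exact div_nonneg (mul_nonneg (k_sq_aux k) (sq_nonneg d)) (by positivity)
  calc q ^ k * (1 - q) ^ (n - k) * (n.choose k : ℝ)
      = (n.choose k : ℝ) * q ^ k * (1 - q) ^ (n - k) * 1 := by ring
    _ ≤ _ := mul_le_mul_of_nonneg_left he hc

lemma phi_mono (σ : ℝ) (q : ℝ) (hq0 : 0 ≤ q) (hq1 : q ≤ 1) (n : ℕ) :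
    MonotoneOn (phi σ q n) (Set.Ici (0 : ℝ)) := by
  intro a ha b hb hab
  apply Finset.sum_le_sum
  intro k hk
  have hq' : (0:ℝ) ≤ 1 - q := by linarith
  have hc : 0 ≤ (n.choose k : ℝ) * q ^ k * (1 - q) ^ (n - k) := by positivity
  apply mul_le_mul_of_nonneg_left _ hc
  apply Real.exp_le_exp.2
  rw [div_eq_mul_inv, div_eq_mul_inv]
  exact mul_le_mul_of_nonneg_right
    (mul_le_mul_of_nonneg_left (pow_le_pow_left₀ ha hab 2) (k_sq_aux k))
    (by positivity)

theorem bayesian_accountant_le_moments_accountant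
    (σ : ℝ) (hσ : 0 < σ) (q : ℝ) (hq0 : 0 ≤ q) (hq1 : q ≤ 1) (n : ℕ) :
    MonotoneOn (phi σ q n) (Set.Ici (0 : ℝ)) ∧
    ∀ {X : Type*} [MeasurableSpace X] (μ : Measure X), IsProbabilityMeasure μ →
      ∀ (d : X → ℝ) (C : ℝ), Measurable d → (∀ᵐ x' ∂μ, |d x'| ≤ C) →
        Real.log (∫ x', phi σ q n |d x'| ∂μ) ≤ Real.log (phi σ q n C) := by
  refine ⟨phi_mono σ q hq0 hq1 n, ?_⟩
  intro X _ μ hμ d C hd hbound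
  have hC : 0 ≤ C := by
    obtain ⟨x, hx⟩ := hbound.exists
    exact le_trans (abs_nonneg _) hx
  have hptle : ∀ᵐ x' ∂μ, phi σ q n |d x'| ≤ phi σ q n C := by
    filter_upwards [hbound] with x hx
    exact phi_mono σ q hq0 hq1 n (Set.mem_Ici.2 (abs_nonneg _)) (Set.mem_Ici.2 hC) hx
  have hcont : Continuous (phi σ q n) := by
    unfold phi
    exact continuous_finset_sum _ (fun k _ => by continuity)
  have hmeas : AEStronglyMeasurable (fun x' => phi σ q n |d x'|) μ :=
    (hcont.measurable.comp hd.abs).aestronglyMeasurable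
  have hint : Integrable (fun x' => phi σ q n |d x'|) μ := by
    apply Integrable.mono' (integrable_const (phi σ q n C)) hmeas
    filter_upwards [hptle] with x hx
    have h0 : (0:ℝ) ≤ phi σ q n |d x| := by linarith [one_le_phi σ q hq0 hq1 n |d x|]
    rw [Real.norm_eq_abs, abs_of_nonneg h0]
    exact hx
  have hIle : (∫ x', phi σ q n |d x'| ∂μ) ≤ phi σ q n C := by
    calc (∫ x', phi σ q n |d x'| ∂μ) ≤ ∫ _, phi σ q n C ∂μ :=
          integral_mono_ae hint (integrable_const _) hptle
      _ = phi σ q n C := by simp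
  have hIpos : (0:ℝ) < ∫ x', phi σ q n |d x'| ∂μ := by
    have h1 : (1:ℝ) ≤ ∫ x', phi σ q n |d x'| ∂μ := by
      calc (1:ℝ) = ∫ _, (1:ℝ) ∂μ := by simp
        _ ≤ _ := integral_mono_ae (integrable_const 1) hint
              (ae_of_all _ fun x => one_le_phi σ q hq0 hq1 n |d x|)
    linarith
  exact Real.log_le_log hIpos hIle
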